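/- arXiv:1212.1881 — 2 statements merged into one kernel-verified Lean document; each statement's English description precedes it below -/
import Mathlib

section
/- For a Boolean-valued relation M over an attribute (item) set S and threshold z, the family of minimal infrequent itemsets equals the set of minimal transversals of the complements of the maximal frequent itemsets: IS⁻(M,z) = tr( {S \ A : A ∈ IS⁺(M,z)} ). -/
/-- A transversal of hypergraph `H` is a set meeting every hyperedge. -/
def IsTransversal {α : Type*} (H : Set (Finset α)) (T : Finset α) : Prop :=
  ∀ E ∈ H, ∃ v ∈ T, v ∈ E

/-- A minimal transversal is a transversal no proper subset of which is a transversal. -/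
def IsMinimalTransversal {α : Type*} (H : Set (Finset α)) (T : Finset α) : Prop :=
  IsTransversal H T ∧ ∀ T' ⊂ T, ¬ IsTransversal H T'

/-- `tr H` is the set of all minimal transversals of `H`. -/
def tr {α : Type*} (H : Set (Finset α)) : Set (Finset α) :=
  {T | IsMinimalTransversal H T}

/-- A hypergraph is simple if no hyperedge is contained in another one. -/
def Simple {α : Type*} (H : Set (Finset α)) : Prop :=
  ∀ E₁ ∈ H, ∀ E₂ ∈ H, E₁ ⊆ E₂ → E₁ = E₂

/-- The frequency of an itemset `U` in the relation `M`: the number of tuples `t`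
with `U ⊆ items(t)`. -/
noncomputable def freq {α : Type*} (M : Multiset (α → Bool)) (U : Finset α) : ℕ :=
  Multiset.card (M.filter (fun t => ∀ a ∈ U, t a = true))

/-- `U` is frequent if its frequency exceeds the threshold `z`. -/
def Frequent {α : Type*} (M : Multiset (α → Bool)) (z : ℕ) (U : Finset α) : Prop :=
  z < freq M U

/-- The maximal (under inclusion) frequent itemsets `IS⁺(M,z)`. -/
def MaxFrequent {α : Type*} [Fintype α] (M : Multiset (α → Bool)) (z : ℕ) :
    Set (Finset α) :=
  {U | Frequent M z U ∧ ∀ W : Finset α, Frequent M z W → U ⊆ W → U = W}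

/-- The minimal (under inclusion) infrequent itemsets `IS⁻(M,z)`. -/
def MinInfrequent {α : Type*} [Fintype α] (M : Multiset (α → Bool)) (z : ℕ) :
    Set (Finset α) :=
  {U | ¬ Frequent M z U ∧ ∀ W : Finset α, W ⊂ U → Frequent M z W}


lemma freq_antitone {α : Type*} (M : Multiset (α → Bool)) {U W : Finset α}
    (h : U ⊆ W) : freq M W ≤ freq M U := by
  classical
  apply Multiset.card_le_card
  apply Multiset.monotone_filter_right
  intro t ht a ha
  exact ht a (h ha)

lemma exists_max_frequent {α : Type*} [Fintype α] [DecidableEq α]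
    (M : Multiset (α → Bool)) (z : ℕ) {U : Finset α} (hU : Frequent M z U) :
    ∃ A ∈ MaxFrequent M z, U ⊆ A := by
  classical
  set s : Finset (Finset α) := Finset.univ.filter (fun W => Frequent M z W ∧ U ⊆ W) with hs
  have hUs : U ∈ s := by simp [hs, hU]
  obtain ⟨A, hA, hmax⟩ := s.exists_max_image (fun W => W.card) ⟨U, hUs⟩
  simp only [hs, Finset.mem_filter] at hA
  refine ⟨A, ⟨hA.2.1, ?_⟩, hA.2.2⟩
  intro W hW hAW
  have hWs : W ∈ s := by
    simp [hs, hW]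
    exact hA.2.2.trans hAW
  exact Finset.eq_of_subset_of_card_le hAW (hmax W hWs)

lemma transversal_iff_infrequent {α : Type*} [Fintype α] [DecidableEq α]
    (M : Multiset (α → Bool)) (z : ℕ) (U : Finset α) :
    IsTransversal ((fun A => Finset.univ \ A) '' MaxFrequent M z) U ↔
      ¬ Frequent M z U := by
  constructor
  · intro hT hF
    obtain ⟨A, hA, hUA⟩ := exists_max_frequent M z hF
    obtain ⟨v, hvU, hvE⟩ := hT (Finset.univ \ A) ⟨A, hA, rfl⟩
    exact (Finset.mem_sdiff.mp hvE).2 (hUA hvU)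
  · intro hNF E hE
    obtain ⟨A, hA, rfl⟩ := hE
    by_contra h
    push_neg at h
    have hUA : U ⊆ A := by
      intro v hv
      have := h v hv
      simp only [Finset.mem_sdiff, Finset.mem_univ, true_and] at this
      exact not_not.mp this
    exact hNF (lt_of_lt_of_le hA.1 (freq_antitone M hUA))

theorem min_infrequent_eq_tr_complements {α : Type*} [Fintype α] [DecidableEq α]
    (M : Multiset (α → Bool)) (z : ℕ) (hz : 0 < z) (hzM : z ≤ Multiset.card M) :
    MinInfrequent M z = tr ((fun A => Finset.univ \ A) '' MaxFrequent M z) := by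
  ext U
  simp only [MinInfrequent, tr, IsMinimalTransversal, Set.mem_setOf_eq]
  constructor
  · rintro ⟨h1, h2⟩
    refine ⟨(transversal_iff_infrequent M z U).mpr h1, ?_⟩
    intro T' hT' hTr
    exact (transversal_iff_infrequent M z T').mp hTr (h2 T' hT')
  · rintro ⟨h1, h2⟩
    refine ⟨(transversal_iff_infrequent M z U).mp h1, ?_⟩
    intro W hW
    by_contra hF
    exact h2 W hW ((transversal_iff_infrequent M z W).mpr hF)
end

section
/- Given M, z, and families G ⊆ IS⁻(M,z) and H ⊆ IS⁺(M,z), there is no maximal frequent itemset outside H and no minimal infrequent itemset outside G if and only if G = tr({S \ A : A ∈ H}). -/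
lemma frequent_mono {α : Type*} (M : Multiset (α → Bool)) (z : ℕ) {U W : Finset α}
    (h : U ⊆ W) (hW : Frequent M z W) : Frequent M z U := by
  refine lt_of_lt_of_le hW ?_
  unfold freq
  apply Multiset.card_le_card
  apply Multiset.monotone_filter_right
  intro t ht a ha
  exact ht a (h ha)

lemma exists_maxfreq {α : Type*} [Fintype α] (M : Multiset (α → Bool)) (z : ℕ)
    {U : Finset α} (hU : Frequent M z U) : ∃ B ∈ MaxFrequent M z, U ⊆ B := by
  classical
  let s := Finset.univ.filter (fun W : Finset α => Frequent M z W ∧ U ⊆ W)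
  have hUs : U ∈ s := by simp [s, hU]
  obtain ⟨B, hBs, hBmax⟩ := s.exists_max_image Finset.card ⟨U, hUs⟩
  simp only [s, Finset.mem_filter, Finset.mem_univ, true_and] at hBs
  refine ⟨B, ⟨hBs.1, ?_⟩, hBs.2⟩
  intro W hW hBW
  have hWs : W ∈ s := by
    simp only [s, Finset.mem_filter, Finset.mem_univ, true_and]
    exact ⟨hW, hBs.2.trans hBW⟩
  exact Finset.eq_of_subset_of_card_le hBW (hBmax W hWs)

lemma transversal_iff {α : Type*} [Fintype α] [DecidableEq α]
    (M : Multiset (α → Bool)) (z : ℕ) (T : Finset α) :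
    IsTransversal ((fun A => Finset.univ \ A) '' MaxFrequent M z) T ↔
      ¬ Frequent M z T := by
  constructor
  · intro h hT
    obtain ⟨B, hB, hTB⟩ := exists_maxfreq M z hT
    obtain ⟨v, hvT, hv⟩ := h _ ⟨B, hB, rfl⟩
    exact (Finset.mem_sdiff.mp hv).2 (hTB hvT)
  · rintro h E ⟨B, hB, rfl⟩
    by_contra hc
    push_neg at hc
    have hTB : T ⊆ B := fun v hv => by
      have := hc v hv
      by_contra hvB
      exact this (Finset.mem_sdiff.mpr ⟨Finset.mem_univ v, hvB⟩)
    exact h (frequent_mono M z hTB hB.1)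

lemma mininfreq_eq_tr {α : Type*} [Fintype α] [DecidableEq α]
    (M : Multiset (α → Bool)) (z : ℕ) :
    MinInfrequent M z = tr ((fun A => Finset.univ \ A) '' MaxFrequent M z) := by
  ext T
  simp only [MinInfrequent, tr, IsMinimalTransversal, Set.mem_setOf_eq, transversal_iff]
  constructor
  · rintro ⟨h1, h2⟩
    exact ⟨h1, fun T' hT' => not_not_intro (h2 T' hT')⟩
  · rintro ⟨h1, h2⟩
    exact ⟨h1, fun W hW => not_not.mp (h2 W hW)⟩

lemma exists_min_transversal {α : Type*} (H : Set (Finset α)) (B : Finset α)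
    (hB : IsTransversal H B) : ∃ T ⊆ B, IsMinimalTransversal H T := by
  classical
  induction B using Finset.strongInduction with
  | _ B ih =>
    by_cases h : ∀ T' ⊂ B, ¬ IsTransversal H T'
    · exact ⟨B, subset_rfl, hB, h⟩
    · push_neg at h
      obtain ⟨T', hT'B, hT'⟩ := h
      obtain ⟨T, hTT', hT⟩ := ih T' hT'B hT'
      exact ⟨T, hTT'.trans hT'B.subset, hT⟩

theorem maxfreq_mininfreq_identification {α : Type*} [Fintype α] [DecidableEq α]
    (M : Multiset (α → Bool)) (z : ℕ) (hz : 0 < z) (hzM : z ≤ Multiset.card M)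
    (G H : Set (Finset α))
    (hG : G ⊆ MinInfrequent M z) (hH : H ⊆ MaxFrequent M z) :
    (MaxFrequent M z = H ∧ MinInfrequent M z = G) ↔
      G = tr ((fun A => Finset.univ \ A) '' H) := by
  classical
  constructor
  · rintro ⟨hHeq, hGeq⟩
    rw [← hGeq, ← hHeq]
    exact mininfreq_eq_tr M z
  · intro hGtr
    have hHfull : MaxFrequent M z = H := by
      refine Set.Subset.antisymm ?_ hH
      intro B hB
      by_contra hBH
      have hBtrans : IsTransversal ((fun A => Finset.univ \ A) '' H) B := by
        rintro E ⟨A, hA, rfl⟩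
        have hAne : ¬ B ⊆ A := by
          intro hBA
          have hBA' : B = A := hB.2 A (hH hA).1 hBA
          exact hBH (hBA' ▸ hA)
        obtain ⟨v, hvB, hvA⟩ := Finset.not_subset.mp hAne
        exact ⟨v, hvB, Finset.mem_sdiff.mpr ⟨Finset.mem_univ v, hvA⟩⟩
      obtain ⟨T, hTB, hTmin⟩ := exists_min_transversal _ B hBtrans
      have hTG : T ∈ G := by rw [hGtr]; exact hTmin
      exact (hG hTG).1 (frequent_mono M z hTB hB.1)
    refine ⟨hHfull, ?_⟩
    rw [hGtr, ← hHfull]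
    exact mininfreq_eq_tr M z
end
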